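/- arXiv:1907.01454 — 2 statements merged into one kernel-verified Lean document; each statement's English description precedes it below -/
import Mathlib

section
/- Let X be a Δ-generated topological space. Then X is Δ-Hausdorff if and only if X has unique sequential limits, i.e., for every sequence x : ℕ → X and all points a, b ∈ X, if x converges to a and x converges to b, then a = b. -/
open Filter Topology

/-- A topological space `X` is *Δ-Hausdorff* if the image of every continuous map
`[0,1] → X` is closed in `X`. -/
def DeltaHausdorff (X : Type*) [TopologicalSpace X] : Prop :=
  ∀ f : C(unitInterval, X), IsClosed (Set.range f)

set_option maxHeartbeats 1000000 in

lemma exists_gamma {E : Type*} [NormedAddCommGroup E] [NormedSpace ℝ E]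
    [CompleteSpace E]
    (t : ℕ → E) (τ : E) (hd : ∀ k, dist (t k) τ ≤ (1/2)^k) :
    ∃ γ : ℝ → E, Continuous γ ∧
      (∀ k : ℕ, γ ((1/(k+2) + 1/(k+1))/2) = t k) ∧
      (∀ m : ℕ, ∀ s ∈ Set.Icc (0:ℝ) (1/(m+1)), dist (γ s) τ ≤ 2 * (1/2)^m) := by
  set a : ℕ → ℝ := fun k => 1/(k+1) with ha
  have ha_pos : ∀ k, 0 < a k := fun k => by positivity
  have ha_anti : ∀ {i j : ℕ}, i ≤ j → a j ≤ a i := by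
    intro i j hij
    apply one_div_le_one_div_of_le (by positivity)
    have : (i:ℝ) ≤ j := by exact_mod_cast hij
    linarith
  have ha_succ_lt : ∀ k, a (k+1) < a k := by
    intro k
    apply one_div_lt_one_div_of_lt (by positivity)
    push_cast; linarith
  set mid : ℕ → ℝ := fun k => (a (k+1) + a k)/2 with hmid
  set hf : ℕ → ℝ := fun k => (a k - a (k+1))/2 with hhf
  have hhf_pos : ∀ k, 0 < hf k := fun k => by
    have := ha_succ_lt k; simp only [hhf]; linarith
  have hmid_sub : ∀ k, mid k - hf k = a (k+1) := fun k => by simp only [hmid, hhf]; ring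
  have hmid_add : ∀ k, mid k + hf k = a k := fun k => by simp only [hmid, hhf]; ring
  set tent : ℕ → ℝ → ℝ := fun k s => max (1 - |s - mid k| / hf k) 0 with htent
  have htent_nonneg : ∀ k s, 0 ≤ tent k s := fun k s => le_max_right _ _
  have htent_le_one : ∀ k s, tent k s ≤ 1 := by
    intro k s
    apply max_le _ zero_le_one
    have h1 : 0 ≤ |s - mid k| / hf k := div_nonneg (abs_nonneg _) (hhf_pos k).le
    linarith
  have htent_zero : ∀ k s, hf k ≤ |s - mid k| → tent k s = 0 := by
    intro k s hks
    apply max_eq_right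
    rw [sub_nonpos]
    rw [le_div_iff₀ (hhf_pos k)]
    linarith
  have htent_mid : ∀ k, tent k (mid k) = 1 := by
    intro k
    simp only [htent, sub_self, abs_zero, zero_div, sub_zero]
    exact max_eq_left zero_le_one
  have hnorm : ∀ k, ‖t k - τ‖ ≤ (1/2)^k := fun k => by
    rw [← dist_eq_norm]; exact hd k
  have hbound : ∀ k s, ‖tent k s • (t k - τ)‖ ≤ (1/2)^k := by
    intro k s
    rw [norm_smul, Real.norm_eq_abs, abs_of_nonneg (htent_nonneg k s)]
    calc tent k s * ‖t k - τ‖ ≤ 1 * ((1/2)^k) :=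
          mul_le_mul (htent_le_one k s) (hnorm k) (norm_nonneg _) zero_le_one
      _ = (1/2)^k := one_mul _
  have hsumgeo : Summable (fun k : ℕ => ((1:ℝ)/2)^k) := summable_geometric_two
  set γ : ℝ → E := fun s => τ + ∑' k, tent k s • (t k - τ) with hγ
  have htent_cont : ∀ k, Continuous (fun s => tent k s) := by
    intro k
    apply Continuous.max _ continuous_const
    apply Continuous.sub continuous_const
    exact ((continuous_id.sub continuous_const).abs).div_const _
  have hγcont : Continuous γ := by
    apply Continuous.add continuous_const
    exact continuous_tsum (fun k => (htent_cont k).smul continuous_const) hsumgeo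
      (fun k s => hbound k s)
  -- summability of terms
  have hterm_sum : ∀ s, Summable (fun k => tent k s • (t k - τ)) := by
    intro s
    exact Summable.of_norm (Summable.of_nonneg_of_le (fun k => norm_nonneg _)
      (fun k => hbound k s) hsumgeo)
  have hnorm_sum : ∀ s, Summable (fun k => ‖tent k s • (t k - τ)‖) := by
    intro s
    exact Summable.of_nonneg_of_le (fun k => norm_nonneg _) (fun k => hbound k s) hsumgeo
  -- the hit property
  have hmid_lt : ∀ k, a (k+1) < mid k := by
    intro k; have := hmid_sub k; have := hhf_pos k; linarith
  have hmid_lt' : ∀ k, mid k < a k := by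
    intro k; have := hmid_add k; have := hhf_pos k; linarith
  have hhit : ∀ k, γ (mid k) = t k := by
    intro k
    have : (∑' j, tent j (mid k) • (t j - τ)) = tent k (mid k) • (t k - τ) := by
      apply tsum_eq_single
      intro j hj
      have hz : tent j (mid k) = 0 := by
        apply htent_zero
        have hfj := hhf_pos j
        rcases lt_or_gt_of_ne hj with hlt | hgt
        · -- j < k : mid k < a k ≤ a (j+1) = mid j - hf j
          have h1 : a k ≤ a (j+1) := ha_anti hlt
          have h2 : mid k < mid j - hf j := by
            rw [hmid_sub]; exact lt_of_lt_of_le (hmid_lt' k) h1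
          rw [abs_sub_comm, abs_of_pos (by linarith)]
          linarith
        · -- j > k : mid j + hf j = a j ≤ a (k+1) < mid k
          have h1 : a j ≤ a (k+1) := ha_anti hgt
          have h2 : mid j + hf j < mid k := by
            rw [hmid_add]; exact lt_of_le_of_lt h1 (hmid_lt k)
          rw [abs_of_pos (by linarith)]
          linarith
      rw [hz, zero_smul]
    show τ + (∑' j, tent j (mid k) • (t j - τ)) = t k
    rw [this, htent_mid k, one_smul, add_sub_cancel]
  -- the bound property
  have hbd : ∀ m : ℕ, ∀ s ∈ Set.Icc (0:ℝ) (1/(m+1)), dist (γ s) τ ≤ 2 * (1/2)^m := by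
    intro m s hs
    have hdist : dist (γ s) τ = ‖∑' k, tent k s • (t k - τ)‖ := by
      rw [dist_eq_norm]
      show ‖τ + (∑' k, tent k s • (t k - τ)) - τ‖ = _
      rw [add_sub_cancel_left]
    rw [hdist]
    have hzero : ∀ j < m, tent j s = 0 := by
      intro j hj
      apply htent_zero
      have h1 : s ≤ a (j+1) := by
        calc s ≤ 1/(m+1) := hs.2
          _ = a m := by simp [ha]
          _ ≤ a (j+1) := ha_anti hj
      have h2 : a (j+1) ≤ mid j - hf j := le_of_eq (hmid_sub j).symm
      have hfj := hhf_pos j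
      rw [abs_sub_comm, abs_of_nonneg (by linarith)]
      linarith
    calc ‖∑' k, tent k s • (t k - τ)‖ ≤ ∑' k, ‖tent k s • (t k - τ)‖ :=
          norm_tsum_le_tsum_norm (hnorm_sum s)
      _ = (∑ j ∈ Finset.range m, ‖tent j s • (t j - τ)‖) +
            ∑' j, ‖tent (j+m) s • (t (j+m) - τ)‖ := (Summable.sum_add_tsum_nat_add m (hnorm_sum s)).symm
      _ = ∑' j, ‖tent (j+m) s • (t (j+m) - τ)‖ := by
          rw [Finset.sum_eq_zero, zero_add]
          intro j hj
          rw [hzero j (Finset.mem_range.mp hj), zero_smul, norm_zero]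
      _ ≤ ∑' j, ((1:ℝ)/2)^(j+m) := by
          apply Summable.tsum_le_tsum (fun j => hbound (j+m) s)
          · exact (summable_nat_add_iff m).mpr (hnorm_sum s)
          · exact (summable_nat_add_iff m).mpr hsumgeo
      _ = 2 * (1/2)^m := by
          simp_rw [pow_add]
          rw [tsum_mul_right, tsum_geometric_two]
  refine ⟨γ, hγcont, fun k => ?_, hbd⟩
  have : ((1:ℝ)/(k+2) + 1/(k+1))/2 = mid k := by
    simp only [hmid, ha]; push_cast; ring
  rw [this]; exact hhit k


lemma dh_const {X : Type*} [TopologicalSpace X] (h : DeltaHausdorff X) {c y : X}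
    (hcy : Tendsto (fun _ : ℕ => c) atTop (𝓝 y)) : y = c := by
  have hs : IsClosed ({c} : Set X) := by
    have := h (ContinuousMap.const unitInterval c)
    rw [show Set.range (ContinuousMap.const unitInterval c) = {c} by ext y; simp [eq_comm]] at this
    exact this
  have hm : y ∈ closure ({c} : Set X) :=
    mem_closure_of_tendsto hcy (Filter.Eventually.of_forall fun _ => rfl)
  rwa [hs.closure_eq, Set.mem_singleton_iff] at hm

lemma dg_isClosed_of_isSeqClosed {X : Type*} [TopologicalSpace X] [DeltaGeneratedSpace X]
    {C : Set X} (hC : IsSeqClosed C) : IsClosed C := by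
  rw [← isOpen_compl_iff, IsGeneratedBy.isOpen_iff (fun n ↦ Fin n → ℝ)]
  intro n p
  rw [show (⇑p ⁻¹' Cᶜ) = (⇑p ⁻¹' C)ᶜ from rfl, isOpen_compl_iff]
  apply IsSeqClosed.isClosed
  intro u l hu hul
  exact hC (fun k => hu k) ((p.continuous.tendsto l).comp hul)

lemma dh_tendsto_eq {X : Type*} [TopologicalSpace X] (h : DeltaHausdorff X) {n : ℕ}
    (p : C(Fin n → ℝ, X)) (t : ℕ → Fin n → ℝ) (τ : Fin n → ℝ) {c : X}
    (htτ : Tendsto t atTop (𝓝 τ)) (hpc : Tendsto (fun k => p (t k)) atTop (𝓝 c)) :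
    c = p τ := by
  -- extract a fast subsequence
  have hev : ∀ m : ℕ, ∀ᶠ k in atTop, dist (t k) τ ≤ (1/2)^m := by
    intro m
    have hball : ∀ᶠ y in 𝓝 τ, dist y τ ≤ (1/2)^m := by
      filter_upwards [Metric.closedBall_mem_nhds τ (show (0:ℝ) < (1/2)^m by positivity)] with y hy
      exact Metric.mem_closedBall.mp hy
    exact htτ.eventually hball
  obtain ⟨φ, hφ, hdist⟩ := Filter.extraction_forall_of_eventually hev
  set t' : ℕ → Fin n → ℝ := fun k => t (φ k) with ht'
  have htτ' : Tendsto t' atTop (𝓝 τ) := htτ.comp hφ.tendsto_atTop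
  have hpc' : Tendsto (fun k => p (t' k)) atTop (𝓝 c) := hpc.comp hφ.tendsto_atTop
  obtain ⟨γ, hγc, hγhit, hγbd⟩ := exists_gamma t' τ hdist
  -- the marked points
  set pt : ℕ → ℝ := fun k => ((1:ℝ)/(k+2) + 1/(k+1))/2 with hpt
  have hpt_pos : ∀ k, 0 < pt k := fun k => by positivity
  have hpt_le : ∀ k, pt k ≤ 1/(k+1) := by
    intro k
    rw [hpt]
    have h1 : (1:ℝ)/(k+2) ≤ 1/(k+1) := by
      apply one_div_le_one_div_of_le (by positivity)
      push_cast; linarith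
    linarith
  -- for every m, find u close to τ with p u = c
  have hu : ∀ m : ℕ, ∃ u : Fin n → ℝ, dist u τ ≤ 2*(1/2)^m ∧ p u = c := by
    intro m
    have hg : ∀ s : unitInterval, (s : ℝ) * (1/(m+1)) ∈ Set.Icc (0:ℝ) (1/(m+1)) := by
      intro s
      constructor
      · exact mul_nonneg s.2.1 (by positivity)
      · calc (s:ℝ) * (1/(m+1)) ≤ 1 * (1/(m+1)) := by
              apply mul_le_mul_of_nonneg_right s.2.2 (by positivity)
        _ = 1/(m+1) := one_mul _
    set Q : C(unitInterval, X) :=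
      ⟨fun s => p (γ ((s : ℝ) * (1/(m+1)))),
        p.continuous.comp (hγc.comp (continuous_subtype_val.mul continuous_const))⟩ with hQ
    have hmem : c ∈ Set.range Q := by
      apply (h Q).mem_of_tendsto (hpc'.comp (tendsto_add_atTop_nat m))
      apply Filter.Eventually.of_forall
      intro k
      -- p (t' (k + m)) = Q s for s = (m+1) * pt (k+m)
      have hs01 : (m+1) * pt (k+m) ∈ Set.Icc (0:ℝ) 1 := by
        constructor
        · have := hpt_pos (k+m); positivity
        · have h1 : pt (k+m) ≤ 1/(m+1) := by
            calc pt (k+m) ≤ 1/((k:ℝ)+m+1) := by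
                  have := hpt_le (k+m); push_cast at this ⊢; linarith
            _ ≤ 1/(m+1) := by
                  apply one_div_le_one_div_of_le (by positivity)
                  push_cast; linarith
          calc ((m:ℝ)+1) * pt (k+m) ≤ ((m:ℝ)+1) * (1/(m+1)) :=
                mul_le_mul_of_nonneg_left h1 (by positivity)
            _ = 1 := by field_simp
      refine ⟨⟨(m+1) * pt (k+m), hs01⟩, ?_⟩
      show p (γ ((((m:ℝ)+1) * pt (k+m)) * (1/(m+1)))) = p (t' (k+m))
      have harg : (((m:ℝ)+1) * pt (k+m)) * (1/(m+1)) = pt (k+m) := by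
        field_simp
      rw [harg]
      have := hγhit (k+m)
      rw [hpt]
      push_cast
      push_cast at this
      rw [this]
    obtain ⟨s, hs⟩ := hmem
    refine ⟨γ ((s : ℝ) * (1/(m+1))), hγbd m _ (hg s), hs⟩
  choose u hub hup using hu
  have huτ : Tendsto u atTop (𝓝 τ) := by
    rw [tendsto_iff_dist_tendsto_zero]
    apply squeeze_zero (fun m => dist_nonneg) hub
    have : Tendsto (fun m : ℕ => 2 * (1/2:ℝ)^m) atTop (𝓝 (2 * 0)) :=
      (tendsto_pow_atTop_nhds_zero_of_lt_one (by norm_num) (by norm_num)).const_mul 2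
    simpa using this
  have hconst : Tendsto (fun _ : ℕ => c) atTop (𝓝 (p τ)) := by
    have h1 : Tendsto (fun m => p (u m)) atTop (𝓝 (p τ)) := (p.continuous.tendsto τ).comp huτ
    simpa [hup] using h1
  exact (dh_const h hconst).symm

/-- A Δ-generated space is Δ-Hausdorff iff it has unique sequential limits. -/
theorem deltaHausdorff_iff_unique_seq_limits
    (X : Type*) [TopologicalSpace X] [DeltaGeneratedSpace X] :
    DeltaHausdorff X ↔
      ∀ (x : ℕ → X) (a b : X),
        Tendsto x atTop (𝓝 a) → Tendsto x atTop (𝓝 b) → a = b := by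
  constructor
  · intro h x a b ha hb
    by_cases hfa : ∃ᶠ n in atTop, x n = a
    · obtain ⟨φ, hφ, hc⟩ := Filter.extraction_of_frequently_atTop hfa
      have hcb : Tendsto (fun k => x (φ k)) atTop (𝓝 b) := hb.comp hφ.tendsto_atTop
      have : Tendsto (fun _ : ℕ => a) atTop (𝓝 b) := by
        apply hcb.congr; intro k; exact hc k
      exact (dh_const h this).symm
    · rw [Filter.not_frequently] at hfa
      obtain ⟨N, hN⟩ := Filter.eventually_atTop.mp hfa
      set x' : ℕ → X := fun n => x (n + N) with hx'
      have ha' : Tendsto x' atTop (𝓝 a) := ha.comp (tendsto_add_atTop_nat N)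
      have hb' : Tendsto x' atTop (𝓝 b) := hb.comp (tendsto_add_atTop_nat N)
      have hxa : ∀ n, x' n ≠ a := fun n => by
        simp only [hx']; exact hN (n + N) (Nat.le_add_left N n)
      set S : Set X := Set.range x' with hS
      have hSnc : ¬ IsClosed S := by
        intro hcl
        have : a ∈ S := hcl.mem_of_tendsto ha'
          (Filter.Eventually.of_forall fun k => Set.mem_range_self k)
        obtain ⟨k, hk⟩ := this
        exact hxa k hk
      have hex : ∃ (n : ℕ) (p : C(Fin n → ℝ, X)), ¬ IsClosed (⇑p ⁻¹' S) := by
        by_contra hall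
        push_neg at hall
        apply hSnc
        rw [← isOpen_compl_iff, IsGeneratedBy.isOpen_iff (fun n ↦ Fin n → ℝ)]
        intro n p
        rw [show (⇑p ⁻¹' Sᶜ) = (⇑p ⁻¹' S)ᶜ from rfl, isOpen_compl_iff]
        exact hall n p
      obtain ⟨n, p, hpnc⟩ := hex
      have hnsc : ¬ IsSeqClosed (⇑p ⁻¹' S) := fun hsc => hpnc hsc.isClosed
      rw [IsSeqClosed] at hnsc
      push_neg at hnsc
      obtain ⟨t, τ, htS, htτ, hτS⟩ := hnsc
      by_cases hfc : ∃ c ∈ S, ∃ᶠ k in atTop, p (t k) = c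
      · obtain ⟨c, hcS, hfc⟩ := hfc
        exfalso
        obtain ⟨φ, hφ, hk⟩ := Filter.extraction_of_frequently_atTop hfc
        have h1 : Tendsto (fun k => p (t (φ k))) atTop (𝓝 (p τ)) :=
          (p.continuous.tendsto τ).comp (htτ.comp hφ.tendsto_atTop)
        have h2 : Tendsto (fun _ : ℕ => c) atTop (𝓝 (p τ)) := by
          apply h1.congr; intro k; exact hk k
        have hpτ : p τ = c := dh_const h h2
        apply hτS
        show p τ ∈ S
        rw [hpτ]
        exact hcS
      · push_neg at hfc
        have hfc' : ∀ c ∈ S, ∀ᶠ k in atTop, p (t k) ≠ c := by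
          intro c hc
          rw [← Filter.not_frequently]
          exact Filter.not_frequently.mpr (hfc c hc)
        have key : ∀ y : X, Tendsto x' atTop (𝓝 y) → Tendsto (fun k => p (t k)) atTop (𝓝 y) := by
          intro y hy
          rw [Filter.tendsto_def]
          intro U hU
          obtain ⟨M, hM⟩ := Filter.eventually_atTop.mp (hy.eventually_mem hU)
          have hev2 : ∀ᶠ k in atTop, ∀ j ∈ Finset.range M, p (t k) ≠ x' j := by
            rw [Filter.eventually_all_finset]
            intro j hj
            exact hfc' (x' j) (Set.mem_range_self j)
          filter_upwards [hev2] with k hk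
          obtain ⟨m, hm⟩ := htS k
          have hmM : M ≤ m := by
            by_contra hlt
            push_neg at hlt
            exact hk m (Finset.mem_range.mpr hlt) hm.symm
          show p (t k) ∈ U
          rw [← hm]
          exact hM m hmM
        have haa : a = p τ := dh_tendsto_eq h p t τ htτ (key a ha')
        have hbb : b = p τ := dh_tendsto_eq h p t τ htτ (key b hb')
        rw [haa, hbb]
  · intro h f
    apply dg_isClosed_of_isSeqClosed
    intro y l hy hyl
    choose t ht using hy
    obtain ⟨τ, -, φ, hφ, hconv⟩ := isCompact_univ.tendsto_subseq (fun k => Set.mem_univ (t k))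
    have h1 : Tendsto (fun k => f (t (φ k))) atTop (𝓝 (f τ)) :=
      (f.continuous.tendsto τ).comp hconv
    have h2 : Tendsto (fun k => f (t (φ k))) atTop (𝓝 l) := by
      have := hyl.comp hφ.tendsto_atTop
      apply this.congr; intro k; exact (ht (φ k)).symm
    exact ⟨τ, h _ (f τ) l h1 h2⟩
end

section
/- The full subcategory of the category of Δ-generated topological spaces consisting of the Δ-Hausdorff spaces is reflective: the full inclusion functor from Δ-Hausdorff Δ-generated spaces into Δ-generated spaces has a left adjoint. -/
open CategoryTheory Set Filter Topology

lemma DeltaHausdorff.t1Space {X : Type*} [TopologicalSpace X] (h : DeltaHausdorff X) :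
    T1Space X := by
  refine ⟨fun x => ?_⟩
  have := h (ContinuousMap.const _ x)
  rwa [ContinuousMap.coe_const,
    show Set.range (Function.const unitInterval x) = {x} from Set.range_const] at this

/-- If a sequential space `Z` admits a jointly injective family of continuous maps into
Δ-Hausdorff spaces, then `Z` is Δ-Hausdorff. -/
lemma deltaHausdorff_of_jointly_injective {Z : Type*} [TopologicalSpace Z] [SequentialSpace Z]
    {ι : Sort*} {W : ι → Type*} [∀ i, TopologicalSpace (W i)]
    (g : ∀ i, C(Z, W i)) (hW : ∀ i, DeltaHausdorff (W i))
    (hinj : ∀ z z' : Z, (∀ i, g i z = g i z') → z = z') : DeltaHausdorff Z := by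
  intro p
  apply IsSeqClosed.isClosed
  intro z y hz hy
  choose t ht using hz
  haveI : SeqCompactSpace unitInterval :=
    compactSpace_iff_seqCompactSpace.mp inferInstance
  obtain ⟨a, φ, hφ, hta⟩ := SeqCompactSpace.tendsto_subseq t
  have key : ∀ i, g i y = g i (p a) := by
    intro i
    haveI : T1Space (W i) := (hW i).t1Space
    have main : ∀ k : ℕ, ∃ s : unitInterval,
        dist s a ≤ 1 / ((k : ℝ) + 1) ∧ g i (p s) = g i y := by
      intro k
      set ε : ℝ := 1 / ((k : ℝ) + 1) with hε
      have hε0 : 0 < ε := by positivity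
      have hcont : Continuous fun u : unitInterval =>
          Set.projIcc (0:ℝ) 1 zero_le_one ((a:ℝ) + ε * (2 * (u:ℝ) - 1)) := by
        exact continuous_projIcc.comp (by fun_prop)
      set σ : C(unitInterval, unitInterval) := ⟨_, hcont⟩ with hσdef
      -- claim A : every point of I within ε of a is in the range of σ
      have claimA : ∀ s : unitInterval, dist s a ≤ ε → ∃ u, σ u = s := by
        intro s hs
        rw [Subtype.dist_eq, Real.dist_eq, abs_le] at hs
        have hmem : ((s:ℝ) - a + ε) / (2 * ε) ∈ Set.Icc (0:ℝ) 1 := by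
          constructor
          · apply div_nonneg (by linarith [hs.1]) (by positivity)
          · rw [div_le_one (by positivity)]; linarith [hs.2]
        refine ⟨⟨_, hmem⟩, ?_⟩
        have harg : (a:ℝ) + ε * (2 * (((s:ℝ) - a + ε) / (2 * ε)) - 1) = (s:ℝ) := by
          field_simp
          ring
        show Set.projIcc (0:ℝ) 1 zero_le_one _ = s
        rw [harg, Set.projIcc_of_mem zero_le_one s.2]
      -- claim B : σ stays within ε of a
      have claimB : ∀ u : unitInterval, dist (σ u) a ≤ ε := by
        intro u
        have h1 : dist (σ u) a
            = dist (Set.projIcc (0:ℝ) 1 zero_le_one ((a:ℝ) + ε * (2 * (u:ℝ) - 1)))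
                (Set.projIcc (0:ℝ) 1 zero_le_one (a:ℝ)) := by
          rw [Set.projIcc_val zero_le_one a]; rfl
        rw [h1]
        calc dist (Set.projIcc (0:ℝ) 1 zero_le_one ((a:ℝ) + ε * (2 * (u:ℝ) - 1)))
              (Set.projIcc (0:ℝ) 1 zero_le_one (a:ℝ))
            ≤ 1 * dist ((a:ℝ) + ε * (2 * (u:ℝ) - 1)) (a:ℝ) :=
              (LipschitzWith.projIcc zero_le_one).dist_le_mul _ _
          _ ≤ ε := by
              rw [one_mul, Real.dist_eq]
              have : |(2 * (u:ℝ) - 1)| ≤ 1 :=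
                abs_le.mpr ⟨by linarith [u.2.1], by linarith [u.2.2]⟩
              calc |(a:ℝ) + ε * (2 * (u:ℝ) - 1) - a| = |ε * (2 * (u:ℝ) - 1)| := by ring_nf
                _ = ε * |(2 * (u:ℝ) - 1)| := by rw [abs_mul, abs_of_pos hε0]
                _ ≤ ε * 1 := by nlinarith
                _ = ε := mul_one ε
      obtain ⟨N, hN⟩ := Metric.tendsto_atTop.mp hta ε hε0
      set q : C(unitInterval, W i) := (g i).comp (p.comp σ) with hq
      have hmem : g i y ∈ Set.range q := by
        apply (hW i q).mem_of_tendsto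
          (((g i).continuous.tendsto y).comp
            (hy.comp ((hφ.tendsto_atTop).comp (tendsto_add_atTop_nat N))))
        refine Filter.Eventually.of_forall fun n => ?_
        have hdist : dist (t (φ (n + N))) a ≤ ε := (hN (n + N) (by omega)).le
        obtain ⟨u, hu⟩ := claimA _ hdist
        exact ⟨u, by simp [hq, hu, ht]⟩
      obtain ⟨u, hu⟩ := hmem
      exact ⟨σ u, claimB u, hu⟩
    choose s hs1 hs2 using main
    have hsa : Filter.Tendsto s atTop (𝓝 a) := by
      rw [tendsto_iff_dist_tendsto_zero]
      exact squeeze_zero (fun k => dist_nonneg) hs1 tendsto_one_div_add_atTop_nhds_zero_nat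
    have h1 : Filter.Tendsto (fun k => g i (p (s k))) atTop (𝓝 (g i (p a))) :=
      ((g i).continuous.tendsto _).comp ((p.continuous.tendsto _).comp hsa)
    have h2 : (fun k => g i (p (s k))) = fun _ => g i y := funext hs2
    rw [h2] at h1
    exact tendsto_const_nhds_iff.mp h1
  exact ⟨a, (hinj y (p a) key).symm⟩

/-- The setoids on `α` whose quotient is Δ-Hausdorff. -/
def goodSetoids (α : Type*) [TopologicalSpace α] : Set (Setoid α) :=
  {s | DeltaHausdorff (Quotient s)}

lemma deltaHausdorff_quotient_sInf (α : Type*) [TopologicalSpace α] [DeltaGeneratedSpace α] :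
    DeltaHausdorff (Quotient (sInf (goodSetoids α))) := by
  refine deltaHausdorff_of_jointly_injective (ι := goodSetoids α)
    (W := fun s => Quotient s.1)
    (fun s => ⟨Quotient.lift (fun a => Quotient.mk s.1 a)
      (fun a b h => Quotient.sound (Setoid.sInf_iff.mp h s.1 s.2)),
      continuous_coinduced_rng.quotient_lift _⟩)
    (fun s => s.2) ?_
  intro z z' h
  induction z using Quotient.ind
  induction z' using Quotient.ind
  refine Quotient.sound (Setoid.sInf_iff.mpr fun s hs => ?_)
  exact Quotient.exact (h ⟨s, hs⟩)

lemma ker_mem_goodSetoids {α Y : Type*} [TopologicalSpace α] [DeltaGeneratedSpace α]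
    [TopologicalSpace Y] (hY : DeltaHausdorff Y) (g : C(α, Y)) :
    Setoid.ker ⇑g ∈ goodSetoids α := by
  refine deltaHausdorff_of_jointly_injective (ι := PUnit.{1}) (W := fun _ => Y)
    (fun _ => ⟨Quotient.lift ⇑g (fun a b h => h), g.continuous.quotient_lift _⟩)
    (fun _ => hY) ?_
  intro z z' h
  induction z using Quotient.ind
  induction z' using Quotient.ind
  exact Quotient.sound (h PUnit.unit)

/-- The category of Δ-generated topological spaces, as a full subcategory of `TopCat`. -/
abbrev DeltaGenCat : Type 1 :=
  ObjectProperty.FullSubcategory (fun X : TopCat.{0} => DeltaGeneratedSpace X)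

/-- The category of Δ-Hausdorff Δ-generated spaces is a reflective (full) subcategory of
the category of Δ-generated spaces: the full inclusion functor has a left adjoint. -/
theorem deltaHausdorff_reflective :
    (ObjectProperty.ι
      (fun X : DeltaGenCat => DeltaHausdorff X.obj)).IsRightAdjoint := by
  let F_obj : DeltaGenCat → ObjectProperty.FullSubcategory (fun X : DeltaGenCat => DeltaHausdorff X.obj) :=
    fun X =>
      letI := X.property
      ⟨⟨TopCat.of (Quotient (sInf (goodSetoids X.obj))),
        (inferInstance : DeltaGeneratedSpace (Quotient (sInf (goodSetoids X.obj))))⟩,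
        deltaHausdorff_quotient_sInf _⟩
  let e : ∀ (X : DeltaGenCat)
      (Y : ObjectProperty.FullSubcategory (fun X : DeltaGenCat => DeltaHausdorff X.obj)),
      ((F_obj X) ⟶ Y) ≃
        (X ⟶ (ObjectProperty.ι (fun X : DeltaGenCat => DeltaHausdorff X.obj)).obj Y) :=
    fun X Y =>
      letI := X.property
      { toFun := fun h => ObjectProperty.homMk (TopCat.ofHom (
          (show C(Quotient (sInf (goodSetoids ↑X.obj)), ↑Y.obj.obj) from h.hom.hom.hom).comp
            ⟨Quotient.mk _, continuous_coinduced_rng⟩))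
        invFun := fun g =>
          let g' : C(↑X.obj, ↑Y.obj.obj) := g.hom.hom
          ObjectProperty.homMk (ObjectProperty.homMk (TopCat.ofHom (
          show C(Quotient (sInf (goodSetoids ↑X.obj)), ↑Y.obj.obj) from
          ⟨Quotient.lift ⇑g' (fun a b h =>
            Setoid.ker_def.mp
              (Setoid.sInf_iff.mp h _ (ker_mem_goodSetoids Y.property g'))),
            g'.continuous.quotient_lift _⟩)))
        left_inv := fun h => by
          apply ObjectProperty.hom_ext
          apply ObjectProperty.hom_ext
          apply TopCat.hom_ext
          apply ContinuousMap.ext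
          intro z
          induction z using Quotient.ind
          rfl
        right_inv := fun g => rfl }
  have he : ∀ X Y Y' (g : Y ⟶ Y') (h : F_obj X ⟶ Y),
      e X Y' (h ≫ g) = e X Y h ≫
        (ObjectProperty.ι (fun X : DeltaGenCat => DeltaHausdorff X.obj)).map g :=
    fun X Y Y' g h => rfl
  exact (Adjunction.adjunctionOfEquivLeft e he).isRightAdjoint
end
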